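/- arXiv:1909.00625 — 2 statements merged into one kernel-verified Lean document; each statement's English description precedes it below -/
import Mathlib

section
/- Every concave distribution function F on [0,∞) with F(0) = 0 admits a mixture representation F(x) = ∫ min(x,θ)/θ dG(θ) for some probability measure G on (0,∞), possibly with an atom structure; equivalently, a concave distribution function on [0,∞) is a scale mixture of uniform distribution functions. -/
open MeasureTheory Filter
open scoped Topology

section Aux
open Set Topology
variable {F : ℝ → ℝ}

/-- The right derivative of a concave function, as a `sSup` of slopes. -/
noncomputable def rd (F : ℝ → ℝ) (t : ℝ) : ℝ := sSup (slope F t '' Set.Ioi t)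

variable (hmono : MonotoneOn F (Set.Ici (0:ℝ)))
    (hconc : ConcaveOn ℝ (Set.Ici (0:ℝ)) F)

section
include hconc

lemma slope_adj {a b c : ℝ} (ha : 0 ≤ a) (hab : a < b) (hbc : b < c) :
    slope F b c ≤ slope F a b := by
  have := hconc.slope_anti_adjacent (x := a) (y := b) (z := c) ha
    (le_trans ha (le_of_lt (hab.trans hbc))) hab hbc
  rwa [slope_def_field, slope_def_field]

lemma rd_bddAbove {t : ℝ} (ht : 0 < t) : BddAbove (slope F t '' Set.Ioi t) := by
  refine ⟨slope F (t/2) t, ?_⟩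
  rintro _ ⟨y, hy, rfl⟩
  exact slope_adj hconc (by positivity) (by linarith) hy

lemma rd_le_slope {a t : ℝ} (ha : 0 ≤ a) (hat : a < t) : rd F t ≤ slope F a t := by
  apply csSup_le ((Set.nonempty_Ioi).image _)
  rintro _ ⟨y, hy, rfl⟩
  exact slope_adj hconc ha hat hy

end

include hmono in
lemma slope_nonneg' {t y : ℝ} (ht : 0 ≤ t) (hty : t < y) : 0 ≤ slope F t y := by
  rw [slope_def_field]
  have := hmono ht (le_trans ht hty.le) hty.le
  exact div_nonneg (by linarith) (by linarith)

include hmono hconc in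
lemma rd_nonneg {t : ℝ} (ht : 0 < t) : 0 ≤ rd F t :=
  le_trans (slope_nonneg' hmono ht.le (by linarith : t < t+1))
    (le_csSup (rd_bddAbove hconc ht) ⟨t+1, by simp, rfl⟩)

include hconc in
lemma rd_anti {a b : ℝ} (ha : 0 < a) (hab : a < b) : rd F b ≤ rd F a :=
  le_trans (rd_le_slope hconc ha.le hab)
    (le_csSup (rd_bddAbove hconc ha) ⟨b, hab, rfl⟩)

include hconc in
lemma rd_hasDeriv {t : ℝ} (ht : 0 < t) :
    HasDerivWithinAt F (rd F t) (Set.Ioi t) t := by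
  rw [hasDerivWithinAt_iff_tendsto_slope' notMem_Ioi_self]
  have hanti : AntitoneOn (slope F t) (Set.Ioi t) := by
    have := hconc.slope_anti (x := t) ht.le
    exact this.mono (fun y hy => ⟨le_trans ht.le (le_of_lt hy), ne_of_gt hy⟩)
  exact hanti.tendsto_nhdsGT (rd_bddAbove hconc ht)

include hmono hconc in
lemma F_left_cont {t : ℝ} (ht : 0 < t) : ContinuousWithinAt F (Set.Iio t) t := by
  set C := slope F (t/4) (t/2) with hC
  have key : ∀ s ∈ Set.Ioo (t/2) t, F t - C * (t - s) ≤ F s ∧ F s ≤ F t := by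
    intro s hs
    obtain ⟨hs1, hs2⟩ := hs
    constructor
    · have h1 : slope F s t ≤ slope F (t/2) s := slope_adj hconc (by positivity) hs1 hs2
      have h2 : slope F (t/2) s ≤ C := slope_adj hconc (by positivity) (by linarith) hs1
      have h3 : slope F s t ≤ C := h1.trans h2
      rw [slope_def_field] at h3
      have h5 : F t - F s ≤ C * (t - s) := by
        rw [div_le_iff₀ (by linarith)] at h3; linarith
      linarith
    · exact hmono (by simp; linarith) (by simp; linarith) hs2.le
  unfold ContinuousWithinAt
  have hmem : Set.Ioo (t/2) t ∈ 𝓝[<] t := Ioo_mem_nhdsLT (by linarith)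
  have hg : Tendsto (fun s => F t - C * (t - s)) (𝓝[<] t) (𝓝 (F t)) := by
    have hcont : Continuous (fun s : ℝ => F t - C * (t - s)) := by continuity
    have h2 := (hcont.tendsto t).mono_left (nhdsWithin_le_nhds (s := Set.Iio t))
    simpa using h2
  refine tendsto_of_tendsto_of_tendsto_of_le_of_le' hg tendsto_const_nhds ?_ ?_
  · filter_upwards [hmem] with s hs using (key s hs).1
  · filter_upwards [hmem] with s hs using (key s hs).2

variable (hrc : ∀ x : ℝ, 0 ≤ x → ContinuousWithinAt F (Set.Ici x) x)

include hmono hconc hrc in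
lemma F_contOn {a b : ℝ} (ha : 0 < a) : ContinuousOn F (Set.Icc a b) := by
  intro t ht
  have htpos : 0 < t := lt_of_lt_of_le ha ht.1
  have : ContinuousAt F t := by
    rw [continuousAt_iff_continuous_left_right]
    exact ⟨continuousWithinAt_Iio_iff_Iic.mp (F_left_cont hmono hconc htpos), hrc t htpos.le⟩
  exact this.continuousWithinAt

include hmono hconc hrc in
lemma F_ftc {a b : ℝ} (ha : 0 < a) (hab : a ≤ b) :
    ∫ t in a..b, rd F t = F b - F a := by
  apply intervalIntegral.integral_eq_sub_of_hasDeriv_right_of_le hab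
    (F_contOn hmono hconc hrc ha)
    (fun t ht => rd_hasDeriv hconc (lt_trans ha ht.1))
  have hanti : AntitoneOn (rd F) (Set.uIcc a b) := by
    rw [Set.uIcc_of_le hab]
    intro p hp q hq hpq
    rcases eq_or_lt_of_le hpq with rfl | h
    · exact le_rfl
    · exact rd_anti hconc (lt_of_lt_of_le ha hp.1) h
  exact hanti.intervalIntegrable

/-- A Stieltjes function tending to 0 at infinity has `measure (Ioi x) = ofReal (-(f x))`. -/
lemma stj_measure_Ioi (K : StieltjesFunction ℝ)
    (hK : Tendsto (K : ℝ → ℝ) atTop (𝓝 0)) (x : ℝ) :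
    K.measure (Set.Ioi x) = ENNReal.ofReal (-(K x)) := by
  have hU : Set.Ioi x = ⋃ n : ℕ, Set.Ioc x (x + n) := by
    ext t
    simp only [Set.mem_Ioi, Set.mem_iUnion, Set.mem_Ioc]
    constructor
    · intro h
      obtain ⟨n, hn⟩ := exists_nat_ge (t - x)
      exact ⟨n, h, by linarith⟩
    · rintro ⟨n, h, -⟩; exact h
  have hmonoS : Monotone (fun n : ℕ => Set.Ioc x (x + n)) := by
    intro m n hmn
    exact Set.Ioc_subset_Ioc_right (by exact_mod_cast add_le_add_right (Nat.cast_le.mpr hmn) x)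
  rw [hU, hmonoS.directed_le.measure_iUnion]
  have h1 : ∀ n : ℕ, K.measure (Set.Ioc x (x + n)) = ENNReal.ofReal (K (x + n) - K x) :=
    fun n => K.measure_Ioc x (x + n)
  simp_rw [h1]
  have hm2 : Monotone (fun n : ℕ => ENNReal.ofReal (K (x + n) - K x)) := by
    intro m n hmn
    exact ENNReal.ofReal_le_ofReal (by
      have := K.mono (by exact_mod_cast add_le_add_right (Nat.cast_le.mpr hmn) x)
      linarith)
  refine tendsto_nhds_unique (tendsto_atTop_iSup hm2) ?_
  have ht : Tendsto (fun n : ℕ => K (x + n)) atTop (𝓝 0) := by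
    apply hK.comp
    exact tendsto_atTop_add_const_left _ x tendsto_natCast_atTop_atTop
  have : Tendsto (fun n : ℕ => K (x + n) - K x) atTop (𝓝 (0 - K x)) :=
    ht.sub tendsto_const_nhds
  simpa using ENNReal.tendsto_ofReal this

end Aux

/-- Every concave distribution function F on [0,∞) with F(0)=0 is a scale mixture of
uniform distribution functions: F(x) = ∫ min(x,θ)/θ dG(θ) for some probability
measure G on (0,∞). -/
theorem stmt2 (F : ℝ → ℝ)
    (hmono : MonotoneOn F (Set.Ici (0:ℝ)))
    (hrc : ∀ x : ℝ, 0 ≤ x → ContinuousWithinAt F (Set.Ici x) x)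
    (hconc : ConcaveOn ℝ (Set.Ici (0:ℝ)) F)
    (h0 : F 0 = 0)
    (hlim : Tendsto F atTop (nhds 1)) :
    ∃ G : Measure ℝ, IsProbabilityMeasure G ∧ G (Set.Ioi (0:ℝ))ᶜ = 0 ∧
      ∀ x : ℝ, 0 ≤ x → F x = ∫ θ, min x θ / θ ∂G := by
  classical
  -- basic bounds on F
  have hF0 : ∀ y : ℝ, 0 ≤ y → 0 ≤ F y := fun y hy => by
    have := hmono (Set.mem_Ici.mpr le_rfl) (Set.mem_Ici.mpr hy) hy
    rwa [h0] at this
  have hF1 : ∀ y : ℝ, 0 ≤ y → F y ≤ 1 := by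
    intro y hy
    refine ge_of_tendsto hlim ?_
    filter_upwards [eventually_ge_atTop y] with z hz
    exact hmono (Set.mem_Ici.mpr hy) (Set.mem_Ici.mpr (hy.trans hz)) hz
  -- bound on rd
  have hrd_le : ∀ t : ℝ, 0 < t → rd F t ≤ 2 / t := by
    intro t ht
    refine le_trans (rd_le_slope (a := t/2) hconc (by positivity) (by linarith)) ?_
    rw [slope_def_field]
    have h1 : F t - F (t/2) ≤ 1 := by
      have := hF0 (t/2) (by positivity); have := hF1 t ht.le; linarith
    have h2 : t - t/2 = t/2 := by ring
    rw [h2]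
    calc (F t - F (t/2)) / (t/2) ≤ 1 / (t/2) := by gcongr
      _ = 2 / t := by
          rw [div_div_eq_mul_div, one_mul]
  -- the monotone function k and its Stieltjes version K
  set k : ℝ → ℝ := fun s => -rd F (Real.exp s) with hk_def
  have hk : Monotone k := by
    intro s1 s2 h
    rcases eq_or_lt_of_le h with rfl | h
    · exact le_rfl
    · exact neg_le_neg (rd_anti hconc (Real.exp_pos s1) (Real.exp_lt_exp.mpr h))
  set K := hk.stieltjesFunction with hK_def
  have hk_le0 : ∀ s, k s ≤ 0 := fun s => neg_nonpos.mpr (rd_nonneg hmono hconc (Real.exp_pos s))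
  have hk_ge : ∀ s, -(2 / Real.exp s) ≤ k s := fun s => neg_le_neg (hrd_le _ (Real.exp_pos s))
  have hk_tendsto : Tendsto k atTop (𝓝 0) := by
    refine tendsto_of_tendsto_of_tendsto_of_le_of_le (g := fun s => -(2 / Real.exp s))
      ?_ tendsto_const_nhds hk_ge hk_le0
    have : Tendsto (fun s : ℝ => 2 / Real.exp s) atTop (𝓝 0) :=
      Tendsto.div_atTop tendsto_const_nhds Real.tendsto_exp_atTop
    simpa using this.neg
  have hK_eq : ∀ s, K s = Function.rightLim k s := fun s => hk.stieltjesFunction_eq s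
  have hK_ge : ∀ s, k s ≤ K s := fun s => hk.le_rightLim le_rfl
  have hK_le0 : ∀ s, K s ≤ 0 := fun s => le_trans (hk.rightLim_le (lt_add_one s)) (hk_le0 (s+1))
  have hK_top : Tendsto (⇑K : ℝ → ℝ) atTop (𝓝 0) :=
    tendsto_of_tendsto_of_tendsto_of_le_of_le hk_tendsto tendsto_const_nhds hK_ge hK_le0
  -- the measure μ on (0,∞)
  set μ : Measure ℝ := K.measure.map Real.exp with hμ_def
  set fb : ℝ → ℝ := fun t => -(K (Real.log t)) with hfb_def
  have hfb_nonneg : ∀ t, 0 ≤ fb t := fun t => neg_nonneg.mpr (hK_le0 _)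
  have hμIoi : ∀ t : ℝ, 0 < t → μ (Set.Ioi t) = ENNReal.ofReal (fb t) := by
    intro t ht
    rw [hμ_def, Measure.map_apply Real.measurable_exp measurableSet_Ioi]
    have hpre : Real.exp ⁻¹' Set.Ioi t = Set.Ioi (Real.log t) := by
      ext s
      simp only [Set.mem_preimage, Set.mem_Ioi]
      exact (Real.log_lt_iff_lt_exp ht).symm
    rw [hpre, stj_measure_Ioi K hK_top]
  have hμcompl : μ ((Set.Ioi (0:ℝ))ᶜ) = 0 := by
    rw [hμ_def, Measure.map_apply Real.measurable_exp measurableSet_Ioi.compl]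
    have : Real.exp ⁻¹' (Set.Ioi (0:ℝ))ᶜ = ∅ := by
      ext s; simp [Real.exp_pos s]
    rw [this, measure_empty]
  have hμae : ∀ᵐ θ ∂μ, θ ∈ Set.Ioi (0:ℝ) := by
    rw [ae_iff]
    convert hμcompl using 2
    rfl
  -- fb agrees with rd a.e.
  have hBad : ∀ᵐ t : ℝ, t ∈ Set.Ioi (0:ℝ) → fb t = rd F t := by
    set D := {s : ℝ | ¬ContinuousAt k s} with hD_def
    have hD : D.Countable := hk.countable_not_continuousAt
    have hnull : volume (Real.exp '' D) = 0 := (hD.image _).measure_zero _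
    rw [ae_iff]
    refine measure_mono_null ?_ hnull
    intro t ht
    simp only [Set.mem_setOf_eq, Classical.not_imp] at ht
    obtain ⟨ht0, hne⟩ := ht
    by_cases hc : Real.log t ∈ D
    · exact ⟨Real.log t, hc, Real.exp_log ht0⟩
    · exfalso
      apply hne
      have hcont : ContinuousAt k (Real.log t) := not_not.mp hc
      have : Function.rightLim k (Real.log t) = k (Real.log t) :=
        hk.continuousWithinAt_Ioi_iff_rightLim_eq.mp hcont.continuousWithinAt
      rw [hfb_def]
      simp only
      rw [hK_eq, this, hk_def]
      simp [Real.exp_log ht0]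
  -- FTC in lintegral form
  have hB0 : ∀ x : ℝ, 0 ≤ x → ∫⁻ t in Set.Ioc 0 x, ENNReal.ofReal (rd F t) = ENNReal.ofReal (F x) := by
    intro x hx
    rcases eq_or_lt_of_le hx with rfl | hx
    · simp [h0]
    · have step : ∀ a : ℝ, 0 < a → a ≤ x →
          ∫⁻ t in Set.Ioc a x, ENNReal.ofReal (rd F t) = ENNReal.ofReal (F x - F a) := by
        intro a ha hax
        have hanti : AntitoneOn (rd F) (Set.uIcc a x) := by
          rw [Set.uIcc_of_le hax]
          intro p hp q hq hpq
          rcases eq_or_lt_of_le hpq with rfl | h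
          · exact le_rfl
          · exact rd_anti hconc (lt_of_lt_of_le ha hp.1) h
        have hint : IntervalIntegrable (rd F) volume a x := hanti.intervalIntegrable
        have hftc := F_ftc hmono hconc hrc ha hax
        rw [intervalIntegral.integral_of_le hax] at hftc
        rw [← hftc, ← ofReal_integral_eq_lintegral_ofReal]
        · exact (intervalIntegrable_iff_integrableOn_Ioc_of_le hax).mp hint
        · refine (ae_restrict_iff' measurableSet_Ioc).mpr (ae_of_all _ fun t ht => ?_)
          exact rd_nonneg hmono hconc (lt_trans ha ht.1)
      set s : ℕ → Set ℝ := fun n => Set.Ioc (x/(n+1)) x with hs_def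
      have hspos : ∀ n : ℕ, (0:ℝ) < x/(n+1) := fun n => by positivity
      have hsle : ∀ n : ℕ, x/(n+1) ≤ x := by
        intro n
        apply div_le_self hx.le
        have : (0:ℝ) ≤ n := Nat.cast_nonneg n
        linarith
      have hU : ⋃ n, s n = Set.Ioc 0 x := by
        ext t
        simp only [hs_def, Set.mem_iUnion, Set.mem_Ioc]
        constructor
        · rintro ⟨n, h1, h2⟩; exact ⟨lt_trans (hspos n) h1, h2⟩
        · rintro ⟨ht0, htx⟩
          obtain ⟨n, hn⟩ := exists_nat_gt (x/t)
          refine ⟨n, ?_, htx⟩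
          rw [div_lt_iff₀ (by positivity)]
          rw [div_lt_iff₀ ht0] at hn
          nlinarith [ht0]
      have hsmono : Monotone s := by
        intro m n hmn
        apply Set.Ioc_subset_Ioc_left
        exact div_le_div_of_nonneg_left hx.le (by positivity)
          (by exact_mod_cast Nat.succ_le_succ hmn)
      set ν : Measure ℝ := volume.withDensity (fun t => ENNReal.ofReal (rd F t)) with hν_def
      have hν : ∀ S : Set ℝ, MeasurableSet S → ν S = ∫⁻ t in S, ENNReal.ofReal (rd F t) :=
        fun S hS => withDensity_apply _ hS
      have hνU : ν (Set.Ioc 0 x) = ⨆ n, ν (s n) := by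
        rw [← hU]; exact hsmono.directed_le.measure_iUnion
      have hνn : ∀ n : ℕ, ν (s n) = ENNReal.ofReal (F x - F (x/(n+1))) := by
        intro n
        rw [hν _ measurableSet_Ioc]
        exact step _ (hspos n) (hsle n)
      have hFan : Tendsto (fun n : ℕ => F (x/(n+1))) atTop (𝓝 0) := by
        have h1 : Tendsto (fun n : ℕ => x/((n:ℝ)+1)) atTop (𝓝 0) :=
          Tendsto.div_atTop tendsto_const_nhds
            (tendsto_atTop_add_const_right _ 1 tendsto_natCast_atTop_atTop)
        have h2 : Tendsto (fun n : ℕ => x/((n:ℝ)+1)) atTop (𝓝[Set.Ici (0:ℝ)] 0) := by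
          rw [tendsto_nhdsWithin_iff]
          exact ⟨h1, Eventually.of_forall fun n => (hspos n).le⟩
        have := (hrc 0 le_rfl).tendsto.comp h2
        rwa [h0] at this
      have hmono2 : Monotone (fun n : ℕ => ENNReal.ofReal (F x - F (x/(n+1)))) := by
        intro m n hmn
        apply ENNReal.ofReal_le_ofReal
        have : x/((n:ℝ)+1) ≤ x/((m:ℝ)+1) :=
          div_le_div_of_nonneg_left hx.le (by positivity)
            (by exact_mod_cast Nat.succ_le_succ hmn)
        have := hmono (Set.mem_Ici.mpr (hspos n).le) (Set.mem_Ici.mpr (hspos m).le) this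
        linarith
      have hlimit : Tendsto (fun n : ℕ => ENNReal.ofReal (F x - F (x/(n+1)))) atTop
          (𝓝 (ENNReal.ofReal (F x - 0))) :=
        ENNReal.tendsto_ofReal (tendsto_const_nhds.sub hFan)
      have : ν (Set.Ioc 0 x) = ENNReal.ofReal (F x) := by
        rw [hνU]
        simp_rw [hνn]
        have := tendsto_nhds_unique (tendsto_atTop_iSup hmono2) hlimit
        rw [this, sub_zero]
      rw [← hν _ measurableSet_Ioc, this]
  -- transfer to fb
  have hB : ∀ x : ℝ, 0 ≤ x → ∫⁻ t in Set.Ioc 0 x, ENNReal.ofReal (fb t) = ENNReal.ofReal (F x) := by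
    intro x hx
    rw [← hB0 x hx]
    apply lintegral_congr_ae
    refine (ae_restrict_iff' measurableSet_Ioc).mpr ?_
    filter_upwards [hBad] with t h ht
    rw [h (Set.mem_Ioi.mpr ht.1)]
  -- the mixing measure G
  set G : Measure ℝ := μ.withDensity (fun θ => ENNReal.ofReal θ) with hG_def
  have hGcompl : G ((Set.Ioi (0:ℝ))ᶜ) = 0 := withDensity_absolutelyContinuous μ _ hμcompl
  have hGae : ∀ᵐ θ ∂G, θ ∈ Set.Ioi (0:ℝ) := by
    rw [ae_iff]
    convert hGcompl using 2
    rfl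
  -- the key lintegral computation
  have hkey : ∀ x : ℝ, 0 ≤ x →
      ∫⁻ θ, ENNReal.ofReal (min x θ) ∂μ = ENNReal.ofReal (F x) := by
    intro x hx
    have hlc : ∫⁻ θ, ENNReal.ofReal (min x θ) ∂μ = ∫⁻ s in Set.Ioi (0:ℝ), μ {a | s < min x a} :=
      lintegral_eq_lintegral_meas_lt μ
        (by filter_upwards [hμae] with θ hθ; exact le_min hx (le_of_lt hθ))
        ((measurable_const.min measurable_id).aemeasurable)
    rw [hlc]
    have hcong : ∫⁻ s in Set.Ioi (0:ℝ), μ {a | s < min x a}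
        = ∫⁻ s in Set.Ioi (0:ℝ), (Set.Ioo (0:ℝ) x).indicator (fun s => ENNReal.ofReal (fb s)) s := by
      apply lintegral_congr_ae
      refine (ae_restrict_iff' measurableSet_Ioi).mpr (ae_of_all _ fun s hs => ?_)
      show μ {a | s < min x a} = (Set.Ioo (0:ℝ) x).indicator (fun s => ENNReal.ofReal (fb s)) s
      by_cases hsx : s < x
      · have hset : {a : ℝ | s < min x a} = Set.Ioi s := by
          ext a
          simp only [Set.mem_setOf_eq, lt_min_iff, Set.mem_Ioi, hsx, true_and]
        rw [hset, hμIoi s hs, Set.indicator_of_mem (Set.mem_Ioo.mpr ⟨hs, hsx⟩)]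
      · have hset : {a : ℝ | s < min x a} = ∅ := by
          ext a
          simp only [Set.mem_setOf_eq, lt_min_iff, Set.mem_empty_iff_false, iff_false, not_and]
          intro h; exact absurd h hsx
        rw [hset, measure_empty, Set.indicator_of_notMem (fun h => hsx h.2)]
    rw [hcong, lintegral_indicator measurableSet_Ioo,
      Measure.restrict_restrict measurableSet_Ioo,
      Set.inter_eq_left.mpr (fun t ht => Set.mem_Ioi.mpr ht.1),
      Measure.restrict_congr_set Ioo_ae_eq_Ioc]
    exact hB x hx
  -- total mass of G
  have hGuniv : G Set.univ = 1 := by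
    rw [hG_def, withDensity_apply _ MeasurableSet.univ, Measure.restrict_univ]
    have hlc : ∫⁻ θ, ENNReal.ofReal θ ∂μ = ∫⁻ s in Set.Ioi (0:ℝ), μ {a | s < a} :=
      lintegral_eq_lintegral_meas_lt μ
        (by filter_upwards [hμae] with θ hθ; exact le_of_lt hθ)
        aemeasurable_id
    have hcong : ∫⁻ s in Set.Ioi (0:ℝ), μ {a | s < a}
        = ∫⁻ s in Set.Ioi (0:ℝ), ENNReal.ofReal (fb s) := by
      apply lintegral_congr_ae
      refine (ae_restrict_iff' measurableSet_Ioi).mpr (ae_of_all _ fun s hs => ?_)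
      show μ {a | s < a} = ENNReal.ofReal (fb s)
      have h2 : {a : ℝ | s < a} = Set.Ioi s := rfl
      rw [h2, hμIoi s hs]
    rw [hlc, hcong]
    -- compute ∫⁻ over Ioi 0 as sup of integrals over Ioc 0 n
    set ν : Measure ℝ := volume.withDensity (fun t => ENNReal.ofReal (fb t)) with hν_def
    have hν : ∀ S : Set ℝ, MeasurableSet S → ν S = ∫⁻ t in S, ENNReal.ofReal (fb t) :=
      fun S hS => withDensity_apply _ hS
    have hU : ⋃ n : ℕ, Set.Ioc (0:ℝ) n = Set.Ioi 0 := by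
      ext t
      simp only [Set.mem_iUnion, Set.mem_Ioc, Set.mem_Ioi]
      constructor
      · rintro ⟨n, h1, -⟩; exact h1
      · intro h
        obtain ⟨n, hn⟩ := exists_nat_ge t
        exact ⟨n, h, hn⟩
    have hsmono : Monotone (fun n : ℕ => Set.Ioc (0:ℝ) n) := fun m n hmn =>
      Set.Ioc_subset_Ioc_right (by exact_mod_cast hmn)
    have hνU : ν (Set.Ioi (0:ℝ)) = ⨆ n : ℕ, ν (Set.Ioc (0:ℝ) n) := by
      rw [← hU]; exact hsmono.directed_le.measure_iUnion
    have hνn : ∀ n : ℕ, ν (Set.Ioc (0:ℝ) n) = ENNReal.ofReal (F n) := by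
      intro n
      rw [hν _ measurableSet_Ioc]
      exact hB n (Nat.cast_nonneg n)
    have hmono2 : Monotone (fun n : ℕ => ENNReal.ofReal (F n)) := by
      intro m n hmn
      exact ENNReal.ofReal_le_ofReal
        (hmono (Set.mem_Ici.mpr (Nat.cast_nonneg m)) (Set.mem_Ici.mpr (Nat.cast_nonneg n))
          (by exact_mod_cast hmn))
    have hlimit : Tendsto (fun n : ℕ => ENNReal.ofReal (F n)) atTop (𝓝 (ENNReal.ofReal 1)) :=
      ENNReal.tendsto_ofReal (hlim.comp tendsto_natCast_atTop_atTop)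
    have hsup : (⨆ n : ℕ, ENNReal.ofReal (F n)) = ENNReal.ofReal 1 :=
      tendsto_nhds_unique (tendsto_atTop_iSup hmono2) hlimit
    rw [← hν _ measurableSet_Ioi, hνU]
    simp_rw [hνn]
    rw [hsup, ENNReal.ofReal_one]
  -- conclusion
  refine ⟨G, ⟨hGuniv⟩, hGcompl, fun x hx => ?_⟩
  have hmeas2 : AEStronglyMeasurable (fun θ => min x θ / θ) G :=
    ((measurable_const.min measurable_id).div measurable_id).aestronglyMeasurable
  have hnn2 : 0 ≤ᵐ[G] fun θ => min x θ / θ := by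
    filter_upwards [hGae] with θ hθ
    exact div_nonneg (le_min hx (le_of_lt hθ)) (le_of_lt hθ)
  have hwd : ∫⁻ θ, ENNReal.ofReal (min x θ / θ) ∂G
      = ∫⁻ θ, ENNReal.ofReal θ * ENNReal.ofReal (min x θ / θ) ∂μ := by
    have hg : Measurable (fun θ : ℝ => ENNReal.ofReal (min x θ / θ)) :=
      ENNReal.measurable_ofReal.comp ((measurable_const.min measurable_id).div measurable_id)
    rw [hG_def, lintegral_withDensity_eq_lintegral_mul μ ENNReal.measurable_ofReal hg]
    rfl
  have hstep : ∫⁻ θ, ENNReal.ofReal θ * ENNReal.ofReal (min x θ / θ) ∂μ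
      = ∫⁻ θ, ENNReal.ofReal (min x θ) ∂μ := by
    apply lintegral_congr_ae
    filter_upwards [hμae] with θ hθ
    rw [← ENNReal.ofReal_mul (le_of_lt hθ)]
    congr 1
    rw [mul_comm, div_mul_cancel₀ _ (ne_of_gt hθ)]
  have hfinal : ∫⁻ θ, ENNReal.ofReal (min x θ / θ) ∂G = ENNReal.ofReal (F x) := by
    rw [hwd, hstep, hkey x hx]
  rw [integral_eq_lintegral_of_nonneg_ae hnn2 hmeas2, hfinal, ENNReal.toReal_ofReal (hF0 x hx)]
end

section
/- Let w_1,…,w_N > 0 with ∑ w_i = 1 and let P be a probability measure on (0,∞) such that P(U_i) ≥ c·w_i for disjoint sets U_i ⊆ [i/m, (i+ε)/m], where c = e^{−η/4} and 0 < ε < 1. Define f_m(x) = ∑_{i=1}^N w_i·(m/i)·1{x ≤ i/m} and f_P(x) = ∫ (1/θ)·1{x ≤ θ} dP(θ). Then for all x ≥ 0, f_m(x) ≤ (1+ε)·e^{η/4}·f_P(x) whenever f_P(x) > 0. -/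
open MeasureTheory

/-- Density-ratio bound: if P(Uᵢ) ≥ e^{−η/4} wᵢ for disjoint Uᵢ ⊆ [i/m,(i+ε)/m],
then f_m(x) ≤ (1+ε) e^{η/4} f_P(x) whenever f_P(x) > 0. -/
theorem stmt11 (m N : ℕ) (hm : 0 < m) (hN : 0 < N) (ε η : ℝ)
    (hε : 0 < ε) (hε1 : ε < 1)
    (w : ℕ → ℝ) (hw : ∀ i ∈ Finset.Icc 1 N, 0 < w i)
    (hwsum : ∑ i ∈ Finset.Icc 1 N, w i = 1)
    (P : Measure ℝ) [IsProbabilityMeasure P] (hP : P (Set.Ioi (0:ℝ))ᶜ = 0)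
    (U : ℕ → Set ℝ) (hUm : ∀ i, MeasurableSet (U i))
    (hUdisj : ∀ i j, i ≠ j → Disjoint (U i) (U j))
    (hUsub : ∀ i ∈ Finset.Icc 1 N, U i ⊆ Set.Icc ((i:ℝ)/m) (((i:ℝ)+ε)/m))
    (hPU : ∀ i ∈ Finset.Icc 1 N, Real.exp (-η/4) * w i ≤ (P (U i)).toReal)
    (fm fP : ℝ → ℝ)
    (hfm : ∀ x : ℝ, fm x = ∑ i ∈ Finset.Icc 1 N,
        w i * ((m:ℝ)/i) * (if x ≤ (i:ℝ)/m then (1:ℝ) else 0))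
    (hfP : ∀ x : ℝ, fP x = ∫ θ, (1/θ) * (if x ≤ θ then (1:ℝ) else 0) ∂P) :
    ∀ x : ℝ, 0 ≤ x → 0 < fP x → fm x ≤ (1+ε) * Real.exp (η/4) * fP x := by
  intro x hx hfPx
  set g : ℝ → ℝ := fun θ => (1/θ) * (if x ≤ θ then (1:ℝ) else 0) with hg
  have hme : (0:ℝ) < (m:ℝ) := by exact_mod_cast hm
  by_cases hInt : Integrable g P
  swap
  · exfalso
    rw [hfP x, integral_undef hInt] at hfPx
    exact lt_irrefl 0 hfPx
  have hg0 : ∀ θ, 0 ≤ g θ := by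
    intro θ
    by_cases h : x ≤ θ
    · simp only [hg, h, if_true, mul_one]
      exact one_div_nonneg.mpr (hx.trans h)
    · simp [hg, h]
  -- constants
  set c : ℕ → ℝ := fun i => ((m:ℝ)/((i:ℝ)+ε)) * (if x ≤ (i:ℝ)/m then (1:ℝ) else 0) with hc
  have hc0 : ∀ i, 0 ≤ c i := by
    intro i
    apply mul_nonneg
    · apply div_nonneg hme.le
      positivity
    · positivity
  -- pointwise bound on U i
  have hgbound : ∀ i ∈ Finset.Icc 1 N, ∀ θ ∈ U i, c i ≤ g θ := by
    intro i hi θ hθ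
    have hi1 : 1 ≤ i := (Finset.mem_Icc.mp hi).1
    have hθI := hUsub i hi hθ
    have hθpos : 0 < θ := by
      have : (1:ℝ)/m ≤ (i:ℝ)/m := by
        gcongr
        exact_mod_cast hi1
      linarith [hθI.1, div_pos (by norm_num : (0:ℝ) < 1) hme]
    by_cases h : x ≤ (i:ℝ)/m
    · have hxθ : x ≤ θ := h.trans hθI.1
      simp only [hg, hc, h, hxθ, if_true, mul_one]
      have h1 : (m:ℝ)/((i:ℝ)+ε) = 1/(((i:ℝ)+ε)/m) := by
        rw [one_div_div]
      rw [h1]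
      exact one_div_le_one_div_of_le hθpos hθI.2
    · simp only [hc, h, if_false, mul_zero]
      exact hg0 θ
  -- Step A : sum of c i * P(U i) ≤ fP x
  have hIntOn : ∀ i ∈ Finset.Icc 1 N, IntegrableOn g (U i) P :=
    fun i hi => hInt.integrableOn
  have stepA : ∑ i ∈ Finset.Icc 1 N, c i * (P (U i)).toReal ≤ fP x := by
    have h1 : ∀ i ∈ Finset.Icc 1 N, c i * (P (U i)).toReal ≤ ∫ θ in U i, g θ ∂P := by
      intro i hi
      exact setIntegral_ge_of_const_le_real (hUm i) (measure_ne_top P (U i))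
        (hgbound i hi) (hIntOn i hi)
    calc ∑ i ∈ Finset.Icc 1 N, c i * (P (U i)).toReal
        ≤ ∑ i ∈ Finset.Icc 1 N, ∫ θ in U i, g θ ∂P := Finset.sum_le_sum h1
      _ = ∫ θ in ⋃ i ∈ Finset.Icc 1 N, U i, g θ ∂P := by
          rw [integral_biUnion_finset _ (fun i _ => hUm i)
            (fun i _ j _ hij => hUdisj i j hij) hIntOn]
      _ ≤ ∫ θ, g θ ∂P := by
          apply setIntegral_le_integral hInt
          exact Filter.Eventually.of_forall hg0
      _ = fP x := (hfP x).symm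
  -- Step B : termwise comparison
  have stepB : fm x ≤ (1+ε) * Real.exp (η/4) *
      ∑ i ∈ Finset.Icc 1 N, c i * (P (U i)).toReal := by
    rw [hfm x, Finset.mul_sum]
    apply Finset.sum_le_sum
    intro i hi
    have hi1 : 1 ≤ i := (Finset.mem_Icc.mp hi).1
    have hi1' : (1:ℝ) ≤ (i:ℝ) := by exact_mod_cast hi1
    have hwi := hw i hi
    have hPi := hPU i hi
    calc w i * ((m:ℝ)/i) * (if x ≤ (i:ℝ)/m then (1:ℝ) else 0)
        ≤ (1+ε) * Real.exp (η/4) * (c i * (Real.exp (-η/4) * w i)) := by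
          by_cases h : x ≤ (i:ℝ)/m
          · simp only [hc, h, if_true, mul_one]
            have hexp : Real.exp (η/4) * Real.exp (-η/4) = 1 := by
              rw [← Real.exp_add]; ring_nf; exact Real.exp_zero
            have hdiv : (m:ℝ)/i ≤ (1+ε) * ((m:ℝ)/((i:ℝ)+ε)) := by
              rw [mul_div_assoc', div_le_div_iff₀ (by linarith) (by linarith)]
              have : ε * 1 ≤ ε * i := by
                apply mul_le_mul_of_nonneg_left hi1' hε.le
              nlinarith [hme.le]
            calc w i * ((m:ℝ)/i) ≤ w i * ((1+ε) * ((m:ℝ)/((i:ℝ)+ε))) :=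
                  mul_le_mul_of_nonneg_left hdiv hwi.le
              _ = (1+ε) * Real.exp (η/4) * ((m:ℝ)/((i:ℝ)+ε) * (Real.exp (-η/4) * w i)) := by
                  rw [show (1+ε) * Real.exp (η/4) * ((m:ℝ)/((i:ℝ)+ε) * (Real.exp (-η/4) * w i))
                    = (Real.exp (η/4) * Real.exp (-η/4)) * ((1+ε) * ((m:ℝ)/((i:ℝ)+ε)) * w i) by ring,
                    hexp]
                  ring
          · simp [hc, h]
      _ ≤ (1+ε) * Real.exp (η/4) * (c i * (P (U i)).toReal) := by
          apply mul_le_mul_of_nonneg_left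
          · exact mul_le_mul_of_nonneg_left hPi (hc0 i)
          · positivity
  calc fm x ≤ (1+ε) * Real.exp (η/4) * ∑ i ∈ Finset.Icc 1 N, c i * (P (U i)).toReal := stepB
    _ ≤ (1+ε) * Real.exp (η/4) * fP x := by
        apply mul_le_mul_of_nonneg_left stepA
        positivity
end
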